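/- Let δ ∈ (0,1) be such that arccos(1−δ) < π/3. Then for every θ ∈ [−π/3, π/3] one has |θ² − (arccos(1−δ))²| ≤ 4·|1 − δ − cos θ| (the comparison estimate between the squared angle deviation and the potential term, inequality (4.16) of the paper). -/

import Mathlib

open Real Finset

noncomputable section

/-- `Kof ε` is the largest integer `K` with `K * ε < 1`. -/
def Kof (ε : ℝ) : ℤ := ⌈1 / ε⌉ - 1

/-- Index set of the lattice `[0,1)² ∩ εℤ²`. -/
def Idx (ε : ℝ) : Finset (ℤ × ℤ) :=
  Finset.Icc 0 (Kof ε) ×ˢ Finset.Icc 0 (Kof ε)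

/-- Indices `(i,j)` with `i + 2 ≤ K`. -/
def IdxH (ε : ℝ) : Finset (ℤ × ℤ) :=
  Finset.Icc 0 (Kof ε - 2) ×ˢ Finset.Icc 0 (Kof ε)

/-- Indices `(i,j)` with `j + 2 ≤ K`. -/
def IdxV (ε : ℝ) : Finset (ℤ × ℤ) :=
  Finset.Icc 0 (Kof ε) ×ˢ Finset.Icc 0 (Kof ε - 2)

/-- Squared Euclidean norm on `ℝ × ℝ`. -/
def sqnorm (v : ℝ × ℝ) : ℝ := v.1 ^ 2 + v.2 ^ 2

/-- Euclidean scalar product on `ℝ × ℝ`. -/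
def dotp (a b : ℝ × ℝ) : ℝ := a.1 * b.1 + a.2 * b.2

/-- Cross product `a × b = a₁b₂ − a₂b₁`. -/
def crossp (a b : ℝ × ℝ) : ℝ := a.1 * b.2 - a.2 * b.1

/-- sign with convention `sign 0 = -1`. -/
def sgn (x : ℝ) : ℝ := if 0 < x then 1 else -1

/-- A spin field: unit vectors on the lattice. -/
def IsSpin (ε : ℝ) (u : ℤ × ℤ → ℝ × ℝ) : Prop :=
  ∀ p ∈ Idx ε, sqnorm (u p) = 1

/-- Spin fields with ferromagnetic Dirichlet boundary condition on the left boundary. -/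
def InS0 (ε : ℝ) (u : ℤ × ℤ → ℝ × ℝ) : Prop :=
  IsSpin ε u ∧ ∀ j ∈ Finset.Icc (0 : ℤ) (Kof ε), u (0, j) = (0, 1)

/-- Horizontal part of the energy. -/
def Ehor (ε δ : ℝ) (u : ℤ × ℤ → ℝ × ℝ) : ℝ :=
  ε ^ 2 / 2 * ∑ p ∈ IdxH ε,
    sqnorm (u p - (2 * (1 - δ)) • u (p.1 + 1, p.2) + u (p.1 + 2, p.2))

/-- Vertical part of the energy. -/
def Ever (ε δ : ℝ) (u : ℤ × ℤ → ℝ × ℝ) : ℝ :=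
  ε ^ 2 / 2 * ∑ p ∈ IdxV ε,
    sqnorm (u p - (2 * (1 - δ)) • u (p.1, p.2 + 1) + u (p.1, p.2 + 2))

/-- The total energy `E_{ε,δ}`. -/
def E (ε δ : ℝ) (u : ℤ × ℤ → ℝ × ℝ) : ℝ := Ehor ε δ u + Ever ε δ u

/-- The scaling function `s(ε,δ)`. -/
def sfun (ε δ : ℝ) : ℝ :=
  min (δ ^ 2)
    (min (ε * (δ * Real.sqrt δ) * (|Real.log (ε / Real.sqrt δ)| + 1)) (ε * Real.sqrt δ))

/-- Horizontal angular velocity of a spin field. -/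
def thetaH (u : ℤ × ℤ → ℝ × ℝ) (p : ℤ × ℤ) : ℝ :=
  sgn (crossp (u p) (u (p.1 + 1, p.2))) * Real.arccos (dotp (u p) (u (p.1 + 1, p.2)))

/-- Vertical angular velocity of a spin field. -/
def thetaV (u : ℤ × ℤ → ℝ × ℝ) (p : ℤ × ℤ) : ℝ :=
  sgn (crossp (u p) (u (p.1, p.2 + 1))) * Real.arccos (dotp (u p) (u (p.1, p.2 + 1)))

/-- The function `p` of Lemma 3.1. -/
def pfun (θ₁ θ₂ : ℝ) : ℝ :=
  if θ₁ = θ₂ then 1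
  else (Real.sin θ₁ ^ 2 + Real.sin θ₂ ^ 2 - (1 - Real.cos (θ₁ + θ₂))) /
    (2 * (Real.sin (θ₂ / 2) - Real.sin (θ₁ / 2)) ^ 2)

end


lemma key_ineq {a b : ℝ} (hb : 0 ≤ b) (hba : b ≤ a) (ha : a ≤ π / 3) :
    a ^ 2 - b ^ 2 ≤ 4 * (Real.cos b - Real.cos a) := by
  have hpi := Real.pi_gt_d6
  have hpi' := Real.pi_lt_d2
  have hcc : Real.cos b - Real.cos a =
      2 * Real.sin ((a + b) / 2) * Real.sin ((a - b) / 2) := by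
    rw [Real.cos_sub_cos, show (b - a) / 2 = -((a - b) / 2) by ring,
      show (b + a) / 2 = (a + b) / 2 by ring, Real.sin_neg]
    ring
  set s := (a + b) / 2 with hs
  set d := (a - b) / 2 with hd
  rcases eq_or_lt_of_le hba with h | h
  · subst h; simp
  have hd0 : 0 < d := by simp [hd]; linarith
  have hd1 : d ≤ 1 := by simp [hd]; nlinarith
  have hs0 : 0 ≤ s := by simp [hs]; linarith
  have hs2 : s ≤ π / 2 := by simp [hs]; nlinarith
  have h1 : 2 / π * s ≤ Real.sin s := Real.mul_le_sin hs0 hs2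
  have h2 : d - d ^ 3 / 4 < Real.sin d := by
    have := Real.sin_gt_sub_cube hd0; nlinarith [pow_pos hd0 3]
  have hdle : d ≤ π / 6 := by simp [hd]; nlinarith
  have hab : a ^ 2 - b ^ 2 = 4 * s * d := by simp [hs, hd]; ring
  have hd3 : d ^ 3 ≤ d := by
    nlinarith [mul_nonneg (mul_nonneg hd0.le hd0.le) (sub_nonneg.2 hd1),
      mul_nonneg hd0.le (sub_nonneg.2 hd1)]
  rw [hab, hcc]
  have hπ0 : (0:ℝ) < π := by linarith
  have h1' : 2 * s ≤ Real.sin s * π := by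
    rw [div_mul_eq_mul_div, div_le_iff₀ hπ0] at h1; linarith
  have hsn : 0 ≤ Real.sin s * π :=
    mul_nonneg (Real.sin_nonneg_of_nonneg_of_le_pi hs0 (by nlinarith)) hπ0.le
  have hm : 2 * s * (d - d ^ 3 / 4) ≤ Real.sin s * π * Real.sin d :=
    mul_le_mul h1' h2.le (by linarith) hsn
  have hgap : 0 ≤ 4 - d ^ 2 - π := by nlinarith
  nlinarith [hm, mul_nonneg (mul_nonneg hs0 hd0.le) hgap, hπ0]

/-- Inequality (4.16): comparison of the squared angle deviation with the potential term. -/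
theorem angle_deviation_estimate (δ θ : ℝ) (hδ : δ ∈ Set.Ioo (0 : ℝ) 1)
    (hδ' : Real.arccos (1 - δ) < π / 3) (hθ : θ ∈ Set.Icc (-(π / 3)) (π / 3)) :
    |θ ^ 2 - Real.arccos (1 - δ) ^ 2| ≤ 4 * |1 - δ - Real.cos θ| := by
  obtain ⟨hδ0, hδ1⟩ := hδ
  set α := Real.arccos (1 - δ) with hα
  have hcosα : Real.cos α = 1 - δ := Real.cos_arccos (by linarith) (by linarith)
  have hα0 : 0 ≤ α := Real.arccos_nonneg _
  have hα3 : α ≤ π / 3 := hδ'.le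
  have ht0 : 0 ≤ |θ| := abs_nonneg θ
  have ht3 : |θ| ≤ π / 3 := abs_le.2 ⟨hθ.1, hθ.2⟩
  rw [← hcosα, ← Real.cos_abs θ, ← sq_abs θ]
  rcases le_total α |θ| with h | h
  · have hk := key_ineq hα0 h ht3
    rw [abs_of_nonneg (by nlinarith : (0:ℝ) ≤ |θ| ^ 2 - α ^ 2),
      abs_of_nonneg (by nlinarith : (0:ℝ) ≤ Real.cos α - Real.cos |θ|)]
    linarith
  · have hk := key_ineq ht0 h hα3
    rw [abs_of_nonpos (by nlinarith : |θ| ^ 2 - α ^ 2 ≤ 0),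
      abs_of_nonpos (by nlinarith : Real.cos α - Real.cos |θ| ≤ 0)]
    linarith
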